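/- Let λ ≠ 0, k ≠ 0, and A be real constants. The function u(x,t) = (A e^{λ k t}/x − 1/(λ k x))^{−1/k} satisfies u_t + u^k·u_x + λ·u = 0 at every point (x,t) with x ≠ 0 at which the base A e^{λ k t}/x − 1/(λ k x) is positive. -/

import Mathlib

open Real

/-- the function
`u(x,t) = (A e^{λkt}/x − 1/(λkx))^{−1/k}` satisfies
`u_t + u^k·u_x + λ·u = 0` at every point with `x ≠ 0` at which the base
`A e^{λkt}/x − 1/(λkx)` is positive. -/
theorem case7_M3_invariant_solution
    (lam k A : ℝ) (hlam : lam ≠ 0) (hk : k ≠ 0) :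
    ∀ u : ℝ × ℝ → ℝ,
      u = (fun p : ℝ × ℝ =>
        (A * exp (lam * k * p.2) / p.1 - 1 / (lam * k * p.1)) ^ (-(1 / k))) →
      ∀ x t : ℝ, x ≠ 0 →
        0 < A * exp (lam * k * t) / x - 1 / (lam * k * x) →
        fderiv ℝ u (x, t) (0, 1) + u (x, t) ^ k * fderiv ℝ u (x, t) (1, 0)
          + lam * u (x, t) = 0 := by
  intro u hu x t hx hb
  subst hu
  set E : ℝ := exp (lam * k * t) with hE
  have hlk : lam * k ≠ 0 := mul_ne_zero hlam hk
  have hlkx : lam * k * x ≠ 0 := mul_ne_zero hlk hx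
  have hfst : HasFDerivAt (fun p : ℝ × ℝ => p.1)
      (ContinuousLinearMap.fst ℝ ℝ ℝ) (x, t) := hasFDerivAt_fst
  have hsnd : HasFDerivAt (fun p : ℝ × ℝ => p.2)
      (ContinuousLinearMap.snd ℝ ℝ ℝ) (x, t) := hasFDerivAt_snd
  have hnum : HasFDerivAt (fun p : ℝ × ℝ => A * exp (lam * k * p.2))
      (A • (E • ((lam * k) • ContinuousLinearMap.snd ℝ ℝ ℝ))) (x, t) :=
    ((hsnd.const_mul (lam * k)).exp).const_mul A
  have hinv1 : HasFDerivAt (fun p : ℝ × ℝ => (p.1)⁻¹)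
      ((-(x ^ 2)⁻¹) • ContinuousLinearMap.fst ℝ ℝ ℝ) (x, t) :=
    (hasDerivAt_inv hx).comp_hasFDerivAt _ hfst
  have hterm1 : HasFDerivAt (fun p : ℝ × ℝ => A * exp (lam * k * p.2) * (p.1)⁻¹)
      ((A * E) • ((-(x ^ 2)⁻¹) • ContinuousLinearMap.fst ℝ ℝ ℝ)
        + x⁻¹ • (A • (E • ((lam * k) • ContinuousLinearMap.snd ℝ ℝ ℝ)))) (x, t) :=
    hnum.mul hinv1
  have hden2 : HasFDerivAt (fun p : ℝ × ℝ => lam * k * p.1)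
      ((lam * k) • ContinuousLinearMap.fst ℝ ℝ ℝ) (x, t) :=
    hfst.const_mul (lam * k)
  have hterm2 : HasFDerivAt (fun p : ℝ × ℝ => (lam * k * p.1)⁻¹)
      ((-((lam * k * x) ^ 2)⁻¹) • ((lam * k) • ContinuousLinearMap.fst ℝ ℝ ℝ)) (x, t) :=
    (hasDerivAt_inv hlkx).comp_hasFDerivAt (x, t) hden2
  set L : ℝ × ℝ →L[ℝ] ℝ :=
    ((A * E) • ((-(x ^ 2)⁻¹) • ContinuousLinearMap.fst ℝ ℝ ℝ)
        + x⁻¹ • (A • (E • ((lam * k) • ContinuousLinearMap.snd ℝ ℝ ℝ))))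
    - ((-((lam * k * x) ^ 2)⁻¹) • ((lam * k) • ContinuousLinearMap.fst ℝ ℝ ℝ)) with hL
  have hg : HasFDerivAt (fun p : ℝ × ℝ =>
      A * exp (lam * k * p.2) / p.1 - 1 / (lam * k * p.1)) L (x, t) := by
    simpa only [div_eq_mul_inv, one_mul, Pi.sub_def] using hterm1.sub hterm2
  set b : ℝ := A * E / x - 1 / (lam * k * x) with hbdef
  have hb0 : b ≠ 0 := ne_of_gt hb
  have hU : HasFDerivAt (fun p : ℝ × ℝ =>
      (A * exp (lam * k * p.2) / p.1 - 1 / (lam * k * p.1)) ^ (-(1 / k)))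
      ((((-(1 / k)) * b ^ ((-(1 / k)) - 1)) • L)) (x, t) :=
    hg.rpow_const (Or.inl hb0)
  rw [hU.fderiv]
  have hL10 : L (1, 0) = A * E * (-(x ^ 2)⁻¹) + ((lam * k * x) ^ 2)⁻¹ * (lam * k) := by
    simp [hL]
  have hL01 : L (0, 1) = x⁻¹ * (A * (E * (lam * k))) := by
    simp [hL]
  simp only [ContinuousLinearMap.smul_apply, smul_eq_mul, hL10, hL01]
  set B : ℝ := b ^ ((-(1 / k)) - 1) with hB
  have hpow : b ^ (-(1 / k)) = B * b := by
    rw [hB, ← Real.rpow_add_one hb0]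
    ring_nf
  have hpowk : (b ^ (-(1 / k))) ^ k = b⁻¹ := by
    rw [← Real.rpow_mul hb.le]
    have hkk : -(1 / k) * k = -1 := by field_simp
    rw [hkk, Real.rpow_neg_one]
  rw [hpowk, hpow]
  have hbne : A * E / x - 1 / (lam * k * x) ≠ 0 := hbdef ▸ hb0
  have hbx : (A * E / x - 1 / (lam * k * x)) * (lam * k * x) = A * E * (lam * k) - 1 := by
    field_simp
  have h2 : A * E * (lam * k) - 1 ≠ 0 := by
    rw [← hbx]; exact mul_ne_zero hbne hlkx
  have hrw : A * E / x - 1 / (lam * k * x) = (A * E * (lam * k) - 1) / (lam * k * x) := by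
    field_simp
  rw [hbdef, hrw]
  field_simp [h2]
  have h3 : -1 + k * A * E * lam ≠ 0 := by
    intro h; apply h2; linear_combination h
  linear_combination B * mul_inv_cancel₀ h3
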